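/- arXiv:2306.06532 — 2 statements merged into one kernel-verified Lean document; each statement's English description precedes it below -/
import Mathlib

section
/- Let M N : ℕ be positive, A : Matrix (Fin M) (Fin M) ℝ and B : Matrix (Fin N) (Fin N) ℝ be symmetric, φ* : Fin M → ℝ, ψ* : Fin N → ℝ, and define θ* : Fin M × Fin N → ℝ by θ* (l, i) = φ* l + ψ* i. Let hA, hB, hAB be the proofs that J_A(φ*), J_B(ψ*), and J_{A ⊞ B}(θ*) are Hermitian (symmetric). Then the multiset of eigenvalues (with multiplicity) of the multiplex Jacobian J_{A ⊞ B}(θ*) equals the multiset of all pairwise sums of the eigenvalues of J_A(φ*) and J_B(ψ*): Finset.univ.val.map (hAB.eigenvalues) = Finset.univ.val.map (fun p : Fin M × Fin N => hA.eigenvalues p.1 + hB.eigenvalues p.2). -/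
open Polynomial Matrix Finset Kronecker

section Aux
variable {ι : Type*} [Fintype ι] [DecidableEq ι]

lemma my_scalar_eq_smul_one : Matrix.scalar ι (X : ℝ[X]) = (X : ℝ[X]) • (1 : Matrix ι ι ℝ[X]) := by
  ext i j
  by_cases h : i = j <;> simp [Matrix.scalar_apply, Matrix.one_apply, Matrix.diagonal_apply, h]

lemma my_charpoly_conj (P Q A : Matrix ι ι ℝ) (hPQ : P * Q = 1) :
    (P * A * Q).charpoly = A.charpoly := by
  have hmap : ∀ X Y : Matrix ι ι ℝ,
      ((X * Y).map (C : ℝ →+* ℝ[X]) : Matrix ι ι ℝ[X]) = X.map C * Y.map C := fun X Y =>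
    Matrix.map_mul
  have h1 : (P.map (C : ℝ →+* ℝ[X])) * (Q.map C) = 1 := by
    rw [← hmap, hPQ]; exact Matrix.map_one _ (map_zero _) (map_one _)
  have hch : charmatrix (P * A * Q) = P.map (C : ℝ →+* ℝ[X]) * charmatrix A * Q.map C := by
    unfold charmatrix
    simp only [RingHom.mapMatrix_apply]
    rw [mul_sub, sub_mul, hmap, hmap]
    congr 1
    rw [my_scalar_eq_smul_one, mul_smul_comm, smul_mul_assoc, mul_one, h1]
  have hdet : (P.map (C : ℝ →+* ℝ[X])).det * (Q.map C).det = 1 := by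
    rw [← det_mul, h1, det_one]
  unfold Matrix.charpoly
  rw [hch, det_mul, det_mul, mul_right_comm, hdet, one_mul]

lemma my_charpoly_diagonal (d : ι → ℝ) :
    (Matrix.diagonal d).charpoly = ∏ i, (X - C (d i)) := by
  unfold Matrix.charpoly
  have : charmatrix (Matrix.diagonal d) = Matrix.diagonal fun i => (X : ℝ[X]) - C (d i) := by
    ext i j
    by_cases h : i = j
    · subst h; simp [charmatrix_apply_eq]
    · simp [charmatrix_apply_ne _ _ _ h, Matrix.diagonal_apply_ne _ h]
  rw [this, det_diagonal]

lemma my_herm_charpoly {A : Matrix ι ι ℝ} (h : A.IsHermitian) :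
    A.charpoly = ∏ i, (X - C (h.eigenvalues i)) := by
  have hsp := h.spectral_theorem
  rw [RCLike.ofReal_real_eq_id, Function.id_comp, Unitary.conjStarAlgAut_apply] at hsp
  have hU : (h.eigenvectorUnitary : Matrix ι ι ℝ) *
      star (h.eigenvectorUnitary : Matrix ι ι ℝ) = 1 :=
    (Matrix.mem_unitaryGroup_iff).mp h.eigenvectorUnitary.2
  conv_lhs => rw [hsp]
  rw [my_charpoly_conj _ _ _ hU, my_charpoly_diagonal]

lemma my_eig_multiset {A : Matrix ι ι ℝ} (h : A.IsHermitian) :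
    Finset.univ.val.map h.eigenvalues = A.charpoly.roots := by
  rw [my_herm_charpoly h, Finset.prod_eq_multiset_prod]
  have : Multiset.map (fun i => X - C (h.eigenvalues i)) Finset.univ.val
      = Multiset.map (fun a => X - C a) (Finset.univ.val.map h.eigenvalues) := by
    rw [Multiset.map_map]; rfl
  rw [this, roots_multiset_prod_X_sub_C]

end Aux

/-- The Kronecker sum `A ⊞ B = A ⊗ I_N + I_M ⊗ B` of two square matrices. -/
def kronSum {M N : ℕ} (A : Matrix (Fin M) (Fin M) ℝ) (B : Matrix (Fin N) (Fin N) ℝ) :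
    Matrix (Fin M × Fin N) (Fin M × Fin N) ℝ :=
  fun p q => (if p.2 = q.2 then A p.1 q.1 else 0) + (if p.1 = q.1 then B p.2 q.2 else 0)

/-- The Kuramoto Jacobian of the coupling matrix `C` at the state `θ`. -/
noncomputable def kuraJac {ι : Type*} [Fintype ι] [DecidableEq ι]
    (C : Matrix ι ι ℝ) (θ : ι → ℝ) : Matrix ι ι ℝ :=
  fun i j =>
    if i = j then -∑ k ∈ Finset.univ \ {i}, C i k * Real.cos (θ k - θ i)
    else C i j * Real.cos (θ j - θ i)

lemma kronSum_eq {M N : ℕ} (A : Matrix (Fin M) (Fin M) ℝ) (B : Matrix (Fin N) (Fin N) ℝ) :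
    kronSum A B = A ⊗ₖ (1 : Matrix (Fin N) (Fin N) ℝ) + (1 : Matrix (Fin M) (Fin M) ℝ) ⊗ₖ B := by
  ext ⟨l, i⟩ ⟨k, j⟩
  simp [kronSum, Matrix.kroneckerMap_apply, Matrix.one_apply, mul_ite, ite_mul]

lemma jac_kronSum {M N : ℕ}
    (A : Matrix (Fin M) (Fin M) ℝ) (B : Matrix (Fin N) (Fin N) ℝ)
    (φ : Fin M → ℝ) (ψ : Fin N → ℝ)
    (θ : Fin M × Fin N → ℝ) (hθ : ∀ (l : Fin M) (i : Fin N), θ (l, i) = φ l + ψ i) :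
    kuraJac (kronSum A B) θ = kronSum (kuraJac A φ) (kuraJac B ψ) := by
  have hterm : ∀ (l k : Fin M) (i j : Fin N),
      kronSum A B (l, i) (k, j) * Real.cos (θ (k, j) - θ (l, i))
        = (if i = j then A l k * Real.cos (φ k - φ l) else 0)
          + (if l = k then B i j * Real.cos (ψ j - ψ i) else 0) := by
    intro l k i j
    rcases eq_or_ne i j with rfl | hj <;> rcases eq_or_ne l k with rfl | hk
    · simp [kronSum, hθ]
    · have harg : θ (k, i) - θ (l, i) = φ k - φ l := by rw [hθ, hθ]; ring
      simp [kronSum, hk, harg]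
    · have harg : θ (l, j) - θ (l, i) = ψ j - ψ i := by rw [hθ, hθ]; ring
      simp [kronSum, hj, harg]
    · simp [kronSum, hj, hk]
  ext ⟨l, i⟩ ⟨k, j⟩
  rcases eq_or_ne i j with rfl | hj <;> rcases eq_or_ne l k with rfl | hk
  · -- diagonal
    have e1 : kuraJac (kronSum A B) θ (l, i) (l, i)
        = -∑ q ∈ Finset.univ \ {((l, i) : Fin M × Fin N)},
            kronSum A B (l, i) q * Real.cos (θ q - θ (l, i)) := by
      simp [kuraJac]
    have e2 : kronSum (kuraJac A φ) (kuraJac B ψ) (l, i) (l, i)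
        = (-∑ k ∈ Finset.univ \ {l}, A l k * Real.cos (φ k - φ l))
          + (-∑ j ∈ Finset.univ \ {i}, B i j * Real.cos (ψ j - ψ i)) := by
      simp [kronSum, kuraJac]
    rw [e1, e2]
    have hsplit : ∀ {κ : Type} [Fintype κ] [DecidableEq κ] (f : κ → ℝ) (p : κ),
        ∑ q ∈ Finset.univ \ {p}, f q = (∑ q, f q) - f p := by
      intro κ _ _ f p
      rw [Finset.sum_eq_sum_sdiff_singleton_add (Finset.mem_univ p) f]
      ring
    rw [hsplit, hsplit, hsplit]
    have Htot : (∑ q : Fin M × Fin N, kronSum A B (l, i) q * Real.cos (θ q - θ (l, i)))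
        = (∑ k, A l k * Real.cos (φ k - φ l)) + ∑ j, B i j * Real.cos (ψ j - ψ i) := by
      rw [Fintype.sum_prod_type]
      simp only [hterm l _ i _]
      simp [Finset.sum_add_distrib, Finset.sum_ite_eq, Finset.sum_ite_irrel]
    rw [Htot, hterm l l i i, if_pos rfl, if_pos rfl]
    ring
  · -- i = j, l ≠ k
    have h : ((l, i) : Fin M × Fin N) ≠ (k, i) := by simp [hk]
    have harg : θ (k, i) - θ (l, i) = φ k - φ l := by rw [hθ, hθ]; ring
    simp [kuraJac, kronSum, h, hk, harg]
  · -- i ≠ j, l = k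
    have h : ((l, i) : Fin M × Fin N) ≠ (l, j) := by simp [hj]
    have harg : θ (l, j) - θ (l, i) = ψ j - ψ i := by rw [hθ, hθ]; ring
    simp [kuraJac, kronSum, h, hj, harg]
  · have h : ((l, i) : Fin M × Fin N) ≠ (k, j) := by simp [hk, hj]
    simp [kuraJac, kronSum, h, hj, hk]

theorem eigenvalues_multiplex_jacobian
    (M N : ℕ) (hM : 0 < M) (hN : 0 < N)
    (A : Matrix (Fin M) (Fin M) ℝ) (B : Matrix (Fin N) (Fin N) ℝ)
    (hAsymm : A.IsSymm) (hBsymm : B.IsSymm)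
    (φ : Fin M → ℝ) (ψ : Fin N → ℝ)
    (θ : Fin M × Fin N → ℝ) (hθ : ∀ (l : Fin M) (i : Fin N), θ (l, i) = φ l + ψ i)
    (hA : (kuraJac A φ).IsHermitian) (hB : (kuraJac B ψ).IsHermitian)
    (hAB : (kuraJac (kronSum A B) θ).IsHermitian) :
    Finset.univ.val.map hAB.eigenvalues =
      Finset.univ.val.map
        (fun p : Fin M × Fin N => hA.eigenvalues p.1 + hB.eigenvalues p.2) := by
  classical
  set U : Matrix (Fin M) (Fin M) ℝ := (hA.eigenvectorUnitary : Matrix (Fin M) (Fin M) ℝ) with hUdef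
  set V : Matrix (Fin N) (Fin N) ℝ := (hB.eigenvectorUnitary : Matrix (Fin N) (Fin N) ℝ) with hVdef
  have hU : U * star U = 1 := (Matrix.mem_unitaryGroup_iff).mp hA.eigenvectorUnitary.2
  have hV : V * star V = 1 := (Matrix.mem_unitaryGroup_iff).mp hB.eigenvectorUnitary.2
  have hAsp : kuraJac A φ = U * Matrix.diagonal hA.eigenvalues * star U := by
    have h := hA.spectral_theorem
    rwa [RCLike.ofReal_real_eq_id, Function.id_comp, Unitary.conjStarAlgAut_apply] at h
  have hBsp : kuraJac B ψ = V * Matrix.diagonal hB.eigenvalues * star V := by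
    have h := hB.spectral_theorem
    rwa [RCLike.ofReal_real_eq_id, Function.id_comp, Unitary.conjStarAlgAut_apply] at h
  have hconj : kuraJac (kronSum A B) θ =
      (U ⊗ₖ V) * Matrix.diagonal (fun p : Fin M × Fin N =>
        hA.eigenvalues p.1 + hB.eigenvalues p.2) * (star U ⊗ₖ star V) := by
    rw [jac_kronSum A B φ ψ θ hθ, kronSum_eq]
    conv_lhs => rw [hAsp, hBsp]
    have e1 : (U * Matrix.diagonal hA.eigenvalues * star U) ⊗ₖ (1 : Matrix (Fin N) (Fin N) ℝ)
        = (U ⊗ₖ V) * (Matrix.diagonal hA.eigenvalues ⊗ₖ (1 : Matrix (Fin N) (Fin N) ℝ))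
          * (star U ⊗ₖ star V) := by
      rw [← Matrix.mul_kronecker_mul, ← Matrix.mul_kronecker_mul, mul_one, hV]
    have e2 : (1 : Matrix (Fin M) (Fin M) ℝ) ⊗ₖ (V * Matrix.diagonal hB.eigenvalues * star V)
        = (U ⊗ₖ V) * ((1 : Matrix (Fin M) (Fin M) ℝ) ⊗ₖ Matrix.diagonal hB.eigenvalues)
          * (star U ⊗ₖ star V) := by
      rw [← Matrix.mul_kronecker_mul, ← Matrix.mul_kronecker_mul, mul_one, hU]
    have emid : (Matrix.diagonal hA.eigenvalues) ⊗ₖ (1 : Matrix (Fin N) (Fin N) ℝ)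
        + (1 : Matrix (Fin M) (Fin M) ℝ) ⊗ₖ Matrix.diagonal hB.eigenvalues
        = Matrix.diagonal (fun p : Fin M × Fin N =>
            hA.eigenvalues p.1 + hB.eigenvalues p.2) := by
      ext ⟨a, b⟩ ⟨c, d⟩
      by_cases h1 : a = c <;> by_cases h2 : b = d <;>
        simp [Matrix.kroneckerMap_apply, Matrix.one_apply, Matrix.diagonal_apply,
          Prod.ext_iff, h1, h2]
    rw [e1, e2, ← add_mul, ← mul_add, emid]
  have hUV : (U ⊗ₖ V) * (star U ⊗ₖ star V) = 1 := by
    rw [← Matrix.mul_kronecker_mul, hU, hV, Matrix.one_kronecker_one]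
  rw [my_eig_multiset hAB, hconj, my_charpoly_conj _ _ _ hUV, my_charpoly_diagonal,
    Finset.prod_eq_multiset_prod]
  have : Multiset.map (fun p : Fin M × Fin N =>
        X - C (hA.eigenvalues p.1 + hB.eigenvalues p.2)) Finset.univ.val
      = Multiset.map (fun a => X - C a)
          (Finset.univ.val.map fun p : Fin M × Fin N =>
            hA.eigenvalues p.1 + hB.eigenvalues p.2) := by
    rw [Multiset.map_map]; rfl
  rw [this, roots_multiset_prod_X_sub_C]
end

section
/- Let M N : ℕ be positive, A : Matrix (Fin M) (Fin M) ℝ and B : Matrix (Fin N) (Fin N) ℝ be symmetric, and let φ* : Fin M → ℝ and ψ* : Fin N → ℝ be equilibria, i.e. F_A φ* = 0 and F_B ψ* = 0. Define the composed equilibrium θ* : Fin M × Fin N → ℝ by θ* (l, i) = φ* l + ψ* i. Then θ* is linearly stable for the Kuramoto system on A ⊞ B if and only if φ* is linearly stable for the Kuramoto system on A and ψ* is linearly stable for the Kuramoto system on B; here a state x is linearly stable for coupling matrix C if the Kuramoto Jacobian J := J_C(x) satisfies (-J).PosSemidef and Module.finrank ℝ (LinearMap.ker (Matrix.mulVecLin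 J)) = 1. -/
/-- The Kuramoto vector field associated with a coupling matrix `C`. -/
noncomputable def kuraField {ι : Type*} [Fintype ι] (C : Matrix ι ι ℝ) (θ : ι → ℝ) : ι → ℝ :=
  fun i => ∑ j, C i j * Real.sin (θ j - θ i)

/-- A state `x` is linearly stable for the coupling matrix `C` if the Kuramoto Jacobian
`J := J_C(x)` is negative semidefinite and `0` is an eigenvalue of `J` of multiplicity one. -/
noncomputable def LinStable {ι : Type*} [Fintype ι] [DecidableEq ι]
    (C : Matrix ι ι ℝ) (x : ι → ℝ) : Prop :=
  (-(kuraJac C x)).PosSemidef ∧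
    Module.finrank ℝ (LinearMap.ker (Matrix.mulVecLin (kuraJac C x))) = 1

open Matrix Finset

section Aux

lemma kuraJac_isSymm {ι : Type*} [Fintype ι] [DecidableEq ι]
    {C : Matrix ι ι ℝ} (hC : C.IsSymm) (x : ι → ℝ) : (kuraJac C x).IsSymm := by
  rw [Matrix.IsSymm]
  ext i j
  simp only [Matrix.transpose_apply, kuraJac]
  by_cases h : j = i
  · subst h; simp
  · rw [if_neg h, if_neg fun h' => h h'.symm]
    rw [hC.apply i j, ← Real.cos_neg (x i - x j), neg_sub]

lemma kuraJac_mulVec_one {ι : Type*} [Fintype ι] [DecidableEq ι]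
    (C : Matrix ι ι ℝ) (x : ι → ℝ) : kuraJac C x *ᵥ (fun _ => (1:ℝ)) = 0 := by
  funext i
  simp only [Matrix.mulVec, dotProduct, mul_one, Pi.zero_apply]
  rw [← Finset.add_sum_erase _ _ (Finset.mem_univ i), Finset.erase_eq]
  have h : ∑ j ∈ Finset.univ \ {i}, kuraJac C x i j
      = ∑ j ∈ Finset.univ \ {i}, C i j * Real.cos (x j - x i) := by
    refine Finset.sum_congr rfl fun j hj => ?_
    simp only [Finset.mem_sdiff, Finset.mem_singleton] at hj
    simp only [kuraJac, if_neg (Ne.symm hj.2)]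
  rw [h]
  simp [kuraJac]

variable {M N : ℕ}

lemma kronSum_neg (P : Matrix (Fin M) (Fin M) ℝ) (Q : Matrix (Fin N) (Fin N) ℝ) :
    -(kronSum P Q) = kronSum (-P) (-Q) := by
  funext p q
  simp only [Matrix.neg_apply, kronSum]
  split_ifs <;> ring

lemma kronSum_isSymm {P : Matrix (Fin M) (Fin M) ℝ} {Q : Matrix (Fin N) (Fin N) ℝ}
    (hP : P.IsSymm) (hQ : Q.IsSymm) : (kronSum P Q).IsSymm := by
  rw [Matrix.IsSymm]
  funext p q
  simp only [Matrix.transpose_apply, kronSum]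
  rw [hP.apply, hQ.apply]
  congr 1 <;> simp [eq_comm]

lemma kronSum_mulVec (P : Matrix (Fin M) (Fin M) ℝ) (Q : Matrix (Fin N) (Fin N) ℝ)
    (x : Fin M × Fin N → ℝ) (l : Fin M) (i : Fin N) :
    (kronSum P Q *ᵥ x) (l, i)
      = (P *ᵥ fun k => x (k, i)) l + (Q *ᵥ fun j => x (l, j)) i := by
  simp only [Matrix.mulVec, dotProduct, kronSum]
  rw [Fintype.sum_prod_type]
  simp only [add_mul, ite_mul, zero_mul, Finset.sum_add_distrib]
  congr 1
  · refine Finset.sum_congr rfl fun k _ => ?_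
    rw [Finset.sum_ite_eq]
    simp
  · have h : ∀ k, (∑ j, if l = k then Q i j * x (k, j) else 0)
        = if l = k then ∑ j, Q i j * x (k, j) else 0 := by
      intro k; split <;> simp
    simp only [h]
    rw [Finset.sum_ite_eq]
    simp

lemma dot_kronSum (P : Matrix (Fin M) (Fin M) ℝ) (Q : Matrix (Fin N) (Fin N) ℝ)
    (x : Fin M × Fin N → ℝ) :
    x ⬝ᵥ (kronSum P Q *ᵥ x)
      = (∑ i, (fun k => x (k, i)) ⬝ᵥ (P *ᵥ fun k => x (k, i)))
      + (∑ l, (fun j => x (l, j)) ⬝ᵥ (Q *ᵥ fun j => x (l, j))) := by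
  simp only [dotProduct]
  rw [Fintype.sum_prod_type]
  simp only [kronSum_mulVec, mul_add, Finset.sum_add_distrib]
  congr 1
  rw [Finset.sum_comm]

end Aux

section PSD

variable {M N : ℕ}

lemma isHermitian_of_isSymm {ι : Type*} [Fintype ι] {P : Matrix ι ι ℝ} (h : P.IsSymm) :
    P.IsHermitian := by
  rwa [Matrix.IsHermitian, Matrix.conjTranspose_eq_transpose_of_trivial]

lemma psd_left (hN : 0 < N) {P : Matrix (Fin M) (Fin M) ℝ} {Q : Matrix (Fin N) (Fin N) ℝ}
    (hPsymm : P.IsSymm) (hQ1 : Q *ᵥ (fun _ => (1:ℝ)) = 0)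
    (h : (-(kronSum P Q)).PosSemidef) : (-P).PosSemidef := by
  refine Matrix.PosSemidef.of_dotProduct_mulVec_nonneg (isHermitian_of_isSymm hPsymm).neg fun x => ?_
  have h2 := h.dotProduct_mulVec_nonneg (fun p => x p.1)
  simp only [star_trivial, Matrix.neg_mulVec, dotProduct_neg] at h2 ⊢
  rw [dot_kronSum] at h2
  have hrow : ∀ l : Fin M, (Q *ᵥ fun _ => x l) = 0 := by
    intro l
    have : (fun _ : Fin N => x l) = x l • (fun _ => (1:ℝ)) := by
      funext j; simp
    rw [this, Matrix.mulVec_smul, hQ1, smul_zero]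
  simp only [hrow, dotProduct_zero, Finset.sum_const_zero, add_zero] at h2
  have hsum : (∑ _i : Fin N, (x ⬝ᵥ P *ᵥ x)) = (N : ℝ) * (x ⬝ᵥ P *ᵥ x) := by
    simp [Finset.sum_const, nsmul_eq_mul]
  rw [hsum] at h2
  have hNpos : (0:ℝ) < N := by exact_mod_cast hN
  nlinarith

lemma psd_right (hM : 0 < M) {P : Matrix (Fin M) (Fin M) ℝ} {Q : Matrix (Fin N) (Fin N) ℝ}
    (hQsymm : Q.IsSymm) (hP1 : P *ᵥ (fun _ => (1:ℝ)) = 0)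
    (h : (-(kronSum P Q)).PosSemidef) : (-Q).PosSemidef := by
  refine Matrix.PosSemidef.of_dotProduct_mulVec_nonneg (isHermitian_of_isSymm hQsymm).neg fun y => ?_
  have h2 := h.dotProduct_mulVec_nonneg (fun p => y p.2)
  simp only [star_trivial, Matrix.neg_mulVec, dotProduct_neg] at h2 ⊢
  rw [dot_kronSum] at h2
  have hcol : ∀ i : Fin N, (P *ᵥ fun _ => y i) = 0 := by
    intro i
    have : (fun _ : Fin M => y i) = y i • (fun _ => (1:ℝ)) := by
      funext j; simp
    rw [this, Matrix.mulVec_smul, hP1, smul_zero]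
  simp only [hcol, dotProduct_zero, Finset.sum_const_zero, zero_add] at h2
  have hsum : (∑ _l : Fin M, (y ⬝ᵥ Q *ᵥ y)) = (M : ℝ) * (y ⬝ᵥ Q *ᵥ y) := by
    simp [Finset.sum_const, nsmul_eq_mul]
  rw [hsum] at h2
  have hMpos : (0:ℝ) < M := by exact_mod_cast hM
  nlinarith

lemma psd_kron {P : Matrix (Fin M) (Fin M) ℝ} {Q : Matrix (Fin N) (Fin N) ℝ}
    (hPsymm : P.IsSymm) (hQsymm : Q.IsSymm)
    (hP : (-P).PosSemidef) (hQ : (-Q).PosSemidef) : (-(kronSum P Q)).PosSemidef := by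
  rw [kronSum_neg]
  refine Matrix.PosSemidef.of_dotProduct_mulVec_nonneg (isHermitian_of_isSymm (kronSum_isSymm ?_ ?_)) fun x => ?_
  · rw [Matrix.IsSymm] at hPsymm ⊢; rw [Matrix.transpose_neg, hPsymm]
  · rw [Matrix.IsSymm] at hQsymm ⊢; rw [Matrix.transpose_neg, hQsymm]
  · simp only [star_trivial]
    rw [dot_kronSum]
    refine add_nonneg (Finset.sum_nonneg fun i _ => ?_) (Finset.sum_nonneg fun l _ => ?_)
    · simpa using hP.dotProduct_mulVec_nonneg (fun k => x (k, i))
    · simpa using hQ.dotProduct_mulVec_nonneg (fun j => x (l, j))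

lemma kron_kernel {P : Matrix (Fin M) (Fin M) ℝ} {Q : Matrix (Fin N) (Fin N) ℝ}
    (hP : (-P).PosSemidef) (hQ : (-Q).PosSemidef) (x : Fin M × Fin N → ℝ) :
    kronSum P Q *ᵥ x = 0 ↔
      (∀ i, (P *ᵥ fun k => x (k, i)) = 0) ∧ (∀ l, (Q *ᵥ fun j => x (l, j)) = 0) := by
  constructor
  · intro h
    have h0 : x ⬝ᵥ (kronSum P Q *ᵥ x) = 0 := by rw [h, dotProduct_zero]
    rw [dot_kronSum] at h0
    have hcolnn : ∀ i : Fin N, 0 ≤ -((fun k => x (k, i)) ⬝ᵥ (P *ᵥ fun k => x (k, i))) := by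
      intro i
      simpa [Matrix.neg_mulVec, dotProduct_neg] using hP.dotProduct_mulVec_nonneg (fun k => x (k, i))
    have hrownn : ∀ l : Fin M, 0 ≤ -((fun j => x (l, j)) ⬝ᵥ (Q *ᵥ fun j => x (l, j))) := by
      intro l
      simpa [Matrix.neg_mulVec, dotProduct_neg] using hQ.dotProduct_mulVec_nonneg (fun j => x (l, j))
    have h0' : (∑ i, -((fun k => x (k, i)) ⬝ᵥ (P *ᵥ fun k => x (k, i))))
        + (∑ l, -((fun j => x (l, j)) ⬝ᵥ (Q *ᵥ fun j => x (l, j)))) = 0 := by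
      simp only [Finset.sum_neg_distrib]
      linarith
    have hs1 : (∑ i, -((fun k => x (k, i)) ⬝ᵥ (P *ᵥ fun k => x (k, i)))) = 0 := by
      have := Finset.sum_nonneg (fun l (_ : l ∈ Finset.univ) => hrownn l)
      have := Finset.sum_nonneg (fun i (_ : i ∈ Finset.univ) => hcolnn i)
      linarith
    have hs2 : (∑ l, -((fun j => x (l, j)) ⬝ᵥ (Q *ᵥ fun j => x (l, j)))) = 0 := by
      have := Finset.sum_nonneg (fun i (_ : i ∈ Finset.univ) => hcolnn i)
      linarith
    constructor
    · intro i
      have hz : -((fun k => x (k, i)) ⬝ᵥ (P *ᵥ fun k => x (k, i))) = 0 :=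
        (Finset.sum_eq_zero_iff_of_nonneg (fun i _ => hcolnn i)).mp hs1 i (Finset.mem_univ i)
      have : (-P) *ᵥ (fun k => x (k, i)) = 0 := by
        rw [← hP.dotProduct_mulVec_zero_iff]
        simpa [Matrix.neg_mulVec, dotProduct_neg] using hz
      rwa [Matrix.neg_mulVec, neg_eq_zero] at this
    · intro l
      have hz : -((fun j => x (l, j)) ⬝ᵥ (Q *ᵥ fun j => x (l, j))) = 0 :=
        (Finset.sum_eq_zero_iff_of_nonneg (fun l _ => hrownn l)).mp hs2 l (Finset.mem_univ l)
      have : (-Q) *ᵥ (fun j => x (l, j)) = 0 := by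
        rw [← hQ.dotProduct_mulVec_zero_iff]
        simpa [Matrix.neg_mulVec, dotProduct_neg] using hz
      rwa [Matrix.neg_mulVec, neg_eq_zero] at this
  · rintro ⟨h1, h2⟩
    funext p
    obtain ⟨l, i⟩ := p
    rw [kronSum_mulVec]
    have e1 := congrFun (h1 i) l
    have e2 := congrFun (h2 l) i
    simp only [Pi.zero_apply] at e1 e2 ⊢
    rw [e1, e2, add_zero]

end PSD
section Ker

lemma ker_eq_span_one {ι : Type*} [Fintype ι] [DecidableEq ι] [Nonempty ι]
    (P : Matrix ι ι ℝ) (h1 : P *ᵥ (fun _ => (1:ℝ)) = 0) :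
    Module.finrank ℝ (LinearMap.ker P.mulVecLin) = 1 ↔
      LinearMap.ker P.mulVecLin = Submodule.span ℝ {((fun _ => (1:ℝ)) : ι → ℝ)} := by
  have hmem : ((fun _ => (1:ℝ)) : ι → ℝ) ∈ LinearMap.ker P.mulVecLin := by
    simpa [LinearMap.mem_ker] using h1
  have hone : ((fun _ => (1:ℝ)) : ι → ℝ) ≠ 0 := by
    intro h
    have := congrFun h (Classical.arbitrary ι)
    simp at this
  have hspan : Module.finrank ℝ (Submodule.span ℝ {((fun _ => (1:ℝ)) : ι → ℝ)}) = 1 :=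
    finrank_span_singleton hone
  constructor
  · intro h
    refine (Submodule.eq_of_le_of_finrank_le ?_ ?_).symm
    · rwa [Submodule.span_le, Set.singleton_subset_iff]
    · rw [h, hspan]
  · intro h; rw [h, hspan]

end Ker

section Jac

variable {M N : ℕ}

lemma jac_eq (A : Matrix (Fin M) (Fin M) ℝ) (B : Matrix (Fin N) (Fin N) ℝ)
    (φ : Fin M → ℝ) (ψ : Fin N → ℝ) (θ : Fin M × Fin N → ℝ)
    (hθ : ∀ (l : Fin M) (i : Fin N), θ (l, i) = φ l + ψ i) :
    kuraJac (kronSum A B) θ = kronSum (kuraJac A φ) (kuraJac B ψ) := by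
  have hθd : ∀ (k l : Fin M) (j i : Fin N),
      θ (k, j) - θ (l, i) = (φ k - φ l) + (ψ j - ψ i) := by
    intro k l j i; rw [hθ, hθ]; ring
  funext p q
  obtain ⟨l, i⟩ := p
  obtain ⟨k, j⟩ := q
  by_cases hpq : (l, i) = (k, j)
  · simp only [Prod.mk.injEq] at hpq
    obtain ⟨rfl, rfl⟩ := hpq
    simp only [kuraJac, kronSum, eq_self_iff_true, if_true, Prod.mk.injEq, and_self, ite_true]
    rw [← neg_add]
    congr 1
    rw [Finset.sum_sdiff_eq_sub (Finset.subset_univ {(l, i)}),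
        Finset.sum_sdiff_eq_sub (Finset.subset_univ {l}),
        Finset.sum_sdiff_eq_sub (Finset.subset_univ {i})]
    simp only [Finset.sum_singleton]
    have hS : ∑ q : Fin M × Fin N,
        ((if i = q.2 then A l q.1 else 0) + (if l = q.1 then B i q.2 else 0))
          * Real.cos (θ q - θ (l, i))
        = (∑ k', A l k' * Real.cos (φ k' - φ l))
          + (∑ j', B i j' * Real.cos (ψ j' - ψ i)) := by
      rw [Fintype.sum_prod_type]
      simp only [hθd, add_mul, ite_mul, zero_mul, Finset.sum_add_distrib]
      congr 1
      · refine Finset.sum_congr rfl fun k' _ => ?_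
        rw [Finset.sum_ite_eq]
        simp
      · have h : ∀ k', (∑ j', if l = k' then B i j' * Real.cos ((φ k' - φ l) + (ψ j' - ψ i)) else 0)
            = if l = k' then ∑ j', B i j' * Real.cos ((φ k' - φ l) + (ψ j' - ψ i)) else 0 := by
          intro k'; split <;> simp
        simp only [h]
        rw [Finset.sum_ite_eq]
        simp
    rw [hS, hθd]
    simp [Real.cos_zero]
    ring
  · simp only [kuraJac, kronSum, if_neg hpq]
    by_cases hij : i = j
    · subst hij
      have hlk : l ≠ k := fun h => hpq (by rw [h])
      simp [hlk, hθd]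
    · by_cases hlk : l = k
      · subst hlk
        simp [hij, hθd]
      · simp [hij, hlk]

end Jac
theorem composed_equilibrium_linStable_iff
    (M N : ℕ) (hM : 0 < M) (hN : 0 < N)
    (A : Matrix (Fin M) (Fin M) ℝ) (B : Matrix (Fin N) (Fin N) ℝ)
    (hAsymm : A.IsSymm) (hBsymm : B.IsSymm)
    (φ : Fin M → ℝ) (ψ : Fin N → ℝ)
    (hφ : kuraField A φ = 0) (hψ : kuraField B ψ = 0)
    (θ : Fin M × Fin N → ℝ) (hθ : ∀ (l : Fin M) (i : Fin N), θ (l, i) = φ l + ψ i) :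
    LinStable (kronSum A B) θ ↔ (LinStable A φ ∧ LinStable B ψ) := by
  classical
  haveI : Nonempty (Fin M) := Fin.pos_iff_nonempty.mp hM
  haveI : Nonempty (Fin N) := Fin.pos_iff_nonempty.mp hN
  set JA := kuraJac A φ with hJAdef
  set JB := kuraJac B ψ with hJBdef
  have hJ : kuraJac (kronSum A B) θ = kronSum JA JB := jac_eq A B φ ψ θ hθ
  have hJAs : JA.IsSymm := kuraJac_isSymm hAsymm φ
  have hJBs : JB.IsSymm := kuraJac_isSymm hBsymm ψ
  have hJA1 : JA *ᵥ (fun _ => (1:ℝ)) = 0 := kuraJac_mulVec_one A φ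
  have hJB1 : JB *ᵥ (fun _ => (1:ℝ)) = 0 := kuraJac_mulVec_one B ψ
  have hK1 : kronSum JA JB *ᵥ (fun _ => (1:ℝ)) = 0 := by
    funext p
    obtain ⟨l, i⟩ := p
    rw [kronSum_mulVec JA JB (fun _ => (1:ℝ)) l i]
    show (JA *ᵥ fun _ => (1:ℝ)) l + (JB *ᵥ fun _ => (1:ℝ)) i = 0
    rw [hJA1, hJB1]
    simp
  unfold LinStable
  rw [hJ]
  constructor
  · rintro ⟨hpsd, hrank⟩
    have hPA : (-JA).PosSemidef := psd_left hN hJAs hJB1 hpsd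
    have hPB : (-JB).PosSemidef := psd_right hM hJBs hJA1 hpsd
    have hkerJ := (ker_eq_span_one (kronSum JA JB) hK1).mp hrank
    have hkerA : LinearMap.ker JA.mulVecLin
        = Submodule.span ℝ {((fun _ => (1:ℝ)) : Fin M → ℝ)} := by
      apply le_antisymm
      · intro u hu
        rw [LinearMap.mem_ker, Matrix.mulVecLin_apply] at hu
        have hx : (fun p : Fin M × Fin N => u p.1)
            ∈ LinearMap.ker (kronSum JA JB).mulVecLin := by
          rw [LinearMap.mem_ker, Matrix.mulVecLin_apply, kron_kernel hPA hPB]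
          constructor
          · intro i; exact hu
          · intro l
            show JB *ᵥ (fun _ => u l) = 0
            have hconst : (fun _ : Fin N => u l) = u l • (fun _ => (1:ℝ)) := by
              funext j; simp
            rw [hconst, Matrix.mulVec_smul, hJB1, smul_zero]
        rw [hkerJ, Submodule.mem_span_singleton] at hx
        obtain ⟨c, hc⟩ := hx
        rw [Submodule.mem_span_singleton]
        refine ⟨c, ?_⟩
        funext l
        have := congrFun hc (l, Classical.arbitrary (Fin N))
        simpa using this
      · rw [Submodule.span_le, Set.singleton_subset_iff]
        simpa [LinearMap.mem_ker] using hJA1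
    have hkerB : LinearMap.ker JB.mulVecLin
        = Submodule.span ℝ {((fun _ => (1:ℝ)) : Fin N → ℝ)} := by
      apply le_antisymm
      · intro u hu
        rw [LinearMap.mem_ker, Matrix.mulVecLin_apply] at hu
        have hx : (fun p : Fin M × Fin N => u p.2)
            ∈ LinearMap.ker (kronSum JA JB).mulVecLin := by
          rw [LinearMap.mem_ker, Matrix.mulVecLin_apply, kron_kernel hPA hPB]
          constructor
          · intro i
            show JA *ᵥ (fun _ => u i) = 0
            have hconst : (fun _ : Fin M => u i) = u i • (fun _ => (1:ℝ)) := by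
              funext j; simp
            rw [hconst, Matrix.mulVec_smul, hJA1, smul_zero]
          · intro l; exact hu
        rw [hkerJ, Submodule.mem_span_singleton] at hx
        obtain ⟨c, hc⟩ := hx
        rw [Submodule.mem_span_singleton]
        refine ⟨c, ?_⟩
        funext i
        have := congrFun hc (Classical.arbitrary (Fin M), i)
        simpa using this
      · rw [Submodule.span_le, Set.singleton_subset_iff]
        simpa [LinearMap.mem_ker] using hJB1
    exact ⟨⟨hPA, (ker_eq_span_one JA hJA1).mpr hkerA⟩,
      hPB, (ker_eq_span_one JB hJB1).mpr hkerB⟩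
  · rintro ⟨⟨hPA, hrA⟩, hPB, hrB⟩
    have hkerA := (ker_eq_span_one JA hJA1).mp hrA
    have hkerB := (ker_eq_span_one JB hJB1).mp hrB
    refine ⟨psd_kron hJAs hJBs hPA hPB, ?_⟩
    rw [ker_eq_span_one (kronSum JA JB) hK1]
    apply le_antisymm
    · intro x hx
      rw [LinearMap.mem_ker, Matrix.mulVecLin_apply, kron_kernel hPA hPB] at hx
      obtain ⟨h1, h2⟩ := hx
      have hcol : ∀ i, ∃ c : ℝ, ∀ l, x (l, i) = c := by
        intro i
        have hm : (fun k => x (k, i)) ∈ LinearMap.ker JA.mulVecLin := by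
          rw [LinearMap.mem_ker, Matrix.mulVecLin_apply]; exact h1 i
        rw [hkerA, Submodule.mem_span_singleton] at hm
        obtain ⟨c, hc⟩ := hm
        exact ⟨c, fun l => by have := congrFun hc l; simpa using this.symm⟩
      have hrow : ∀ l, ∃ d : ℝ, ∀ i, x (l, i) = d := by
        intro l
        have hm : (fun j => x (l, j)) ∈ LinearMap.ker JB.mulVecLin := by
          rw [LinearMap.mem_ker, Matrix.mulVecLin_apply]; exact h2 l
        rw [hkerB, Submodule.mem_span_singleton] at hm
        obtain ⟨d, hd⟩ := hm
        exact ⟨d, fun i => by have := congrFun hd i; simpa using this.symm⟩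
      obtain ⟨c, hc⟩ := hcol (Classical.arbitrary (Fin N))
      rw [Submodule.mem_span_singleton]
      refine ⟨c, ?_⟩
      funext p
      obtain ⟨l, i⟩ := p
      obtain ⟨d, hd⟩ := hrow l
      have hxc : x (l, i) = c := by rw [hd i, ← hd (Classical.arbitrary (Fin N)), hc l]
      simp [hxc]
    · rw [Submodule.span_le, Set.singleton_subset_iff]
      simpa [LinearMap.mem_ker] using hK1
end
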